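/- Let A be a finite-dimensional self-injective k-algebra, let soc(A) denote the socle of A as a right A-module (a two-sided ideal, equal to the left socle since A is self-injective, so φ(soc(A)) = soc(A) for every automorphism φ), and let φ be a k-algebra automorphism of A such that the automorphism of A/soc(A) induced by φ is inner, i.e. there exists an invertible element v of A/soc(A) with φ(a) + soc(A) = v⁻¹(a + soc(A))v for all a ∈ A. Then φ is stably inner. -/

import Mathlib

universe u v w

section StablePrelude

variable {k : Type u} {A : Type v} [Field k] [Ring A] [Algebra k A]

/-- The right `A`-module `M` twisted by the algebra automorphism `φ`:
same underlying additive group, with right action `m ·_φ a = m · φ a`. -/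
def Tw (_φ : A ≃ₐ[k] A) (M : Type w) : Type w := M

/-- The identity function, viewed as a map `M → Tw φ M`. -/
def Tw.of (φ : A ≃ₐ[k] A) {M : Type w} (m : M) : Tw φ M := m

instance (φ : A ≃ₐ[k] A) (M : Type w) [inst : AddCommGroup M] : AddCommGroup (Tw φ M) := inst

instance (φ : A ≃ₐ[k] A) (M : Type w) [AddCommGroup M] [Module Aᵐᵒᵖ M] :
    Module Aᵐᵒᵖ (Tw φ M) :=
  Module.compHom M (RingHom.op φ.toRingEquiv.toRingHom)

/-- A right-module map `f : M → N` is also `A`-linear as a map `M_φ → N_φ`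
(with the same underlying function). -/
def twMap (φ : A ≃ₐ[k] A) {M N : Type w} [AddCommGroup M] [Module Aᵐᵒᵖ M]
    [AddCommGroup N] [Module Aᵐᵒᵖ N] (f : M →ₗ[Aᵐᵒᵖ] N) :
    Tw φ M →ₗ[Aᵐᵒᵖ] Tw φ N where
  toFun m := Tw.of φ (f m)
  map_add' := f.map_add
  map_smul' r m := f.map_smul (RingHom.op φ.toRingEquiv.toRingHom r) m

/-- `f` factors through a projective module. -/
def FactorsThroughProjective {R : Type*} [Ring R] {M N : Type w}
    [AddCommGroup M] [Module R M] [AddCommGroup N] [Module R N] (f : M →ₗ[R] N) : Prop :=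
  ∃ (P : Type w) (_ : AddCommGroup P) (_ : Module R P),
    Module.Projective R P ∧ ∃ (g : M →ₗ[R] P) (h : P →ₗ[R] N), f = h ∘ₗ g

/-- An automorphism `φ` of `A` is *stably inner* if restriction of scalars along `φ`
induces a functor on the stable category of finitely generated right `A`-modules that is
isomorphic to the identity functor: there is a family of maps `η_M : M → M_φ` that is
natural up to maps factoring through projectives and consists of stable isomorphisms. -/
def StablyInner (φ : A ≃ₐ[k] A) : Prop :=
  ∃ η : ∀ (M : Type v) (_ : AddCommGroup M) (_ : Module Aᵐᵒᵖ M) (_ : Module.Finite Aᵐᵒᵖ M),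
      M →ₗ[Aᵐᵒᵖ] Tw φ M,
    (∀ (M : Type v) (iM : AddCommGroup M) (mM : Module Aᵐᵒᵖ M) (fM : Module.Finite Aᵐᵒᵖ M)
        (N : Type v) (iN : AddCommGroup N) (mN : Module Aᵐᵒᵖ N) (fN : Module.Finite Aᵐᵒᵖ N)
        (f : M →ₗ[Aᵐᵒᵖ] N),
        FactorsThroughProjective (η N iN mN fN ∘ₗ f - twMap φ f ∘ₗ η M iM mM fM)) ∧
    (∀ (M : Type v) (iM : AddCommGroup M) (mM : Module Aᵐᵒᵖ M) (fM : Module.Finite Aᵐᵒᵖ M),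
        ∃ ζ : Tw φ M →ₗ[Aᵐᵒᵖ] M,
          FactorsThroughProjective (ζ ∘ₗ η M iM mM fM - LinearMap.id) ∧
          FactorsThroughProjective (η M iM mM fM ∘ₗ ζ - LinearMap.id))

end StablePrelude

namespace StableAux
open MulOpposite

variable {k : Type u} {A : Type v} [Field k] [Ring A] [Algebra k A]

lemma tw_smul (φ : A ≃ₐ[k] A) {M : Type w} [AddCommGroup M] [Module Aᵐᵒᵖ M]
    (r : Aᵐᵒᵖ) (x : Tw φ M) : r • x = (op (φ (unop r))) • (show M from x) := rfl

/-- Left multiplication as an `Aᵐᵒᵖ`-linear endomorphism of `A`. -/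
def lmul (a : A) : A →ₗ[Aᵐᵒᵖ] A where
  toFun x := a * x
  map_add' := mul_add a
  map_smul' r x := by
    show a * (x * unop r) = (a * x) * unop r
    rw [mul_assoc]

lemma mul_mem_soc (soc : Submodule Aᵐᵒᵖ A)
    (hsoc : soc = sSup {S : Submodule Aᵐᵒᵖ A | IsSimpleModule Aᵐᵒᵖ S})
    (a : A) {s : A} (hs : s ∈ soc) : a * s ∈ soc := by
  have hle : soc ≤ Submodule.comap (lmul a) soc := by
    conv_lhs => rw [hsoc]
    apply sSup_le
    intro S hS
    have hS' : IsSimpleModule Aᵐᵒᵖ ↥S := hS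
    rw [← Submodule.map_le_iff_le_comap]
    set L : ↥S →ₗ[Aᵐᵒᵖ] A := (lmul a).comp S.subtype with hL
    rcases eq_bot_or_eq_top (LinearMap.ker L) with hk | hk
    · have hinj : Function.Injective L := by
        rw [← LinearMap.ker_eq_bot]; exact hk
      have hrange : LinearMap.range L = Submodule.map (lmul a) S := by
        rw [hL, LinearMap.range_comp, Submodule.range_subtype]
      have : IsSimpleModule Aᵐᵒᵖ ↥(Submodule.map (lmul a) S) := by
        rw [← hrange]
        exact IsSimpleModule.congr (LinearEquiv.ofInjective L hinj).symm
      rw [hsoc]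
      exact le_sSup this
    · intro x hx
      rcases hx with ⟨y, hy, rfl⟩
      have : (⟨y, hy⟩ : ↥S) ∈ LinearMap.ker L := by rw [hk]; trivial
      have hzero : lmul a y = 0 := this
      rw [hsoc]
      show lmul a y ∈ _
      rw [hzero]
      exact Submodule.zero_mem _
  exact hle hs

lemma projective_of_equiv {R : Type*} [Ring R] {X Y : Type*}
    [AddCommGroup X] [Module R X] [AddCommGroup Y] [Module R Y]
    (e : X ≃ₗ[R] Y) (h : Module.Projective R X) : Module.Projective R Y := by
  haveI := h
  exact Module.Projective.of_split e.symm.toLinearMap e.toLinearMap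
    (by ext x; simp)

lemma projective_sup {R : Type*} [Ring R] {M : Type*} [AddCommGroup M] [Module R M]
    (p q : Submodule R M) (hpq : p ⊓ q = ⊥)
    (hp : Module.Projective R ↥p) (hq : Module.Projective R ↥q) :
    Module.Projective R ↥(p ⊔ q) := by
  haveI := hp; haveI := hq
  have hmem : ∀ x : ↥p × ↥q, (x.1 : M) + (x.2 : M) ∈ p ⊔ q := fun x =>
    Submodule.add_mem _ (Submodule.mem_sup_left x.1.2) (Submodule.mem_sup_right x.2.2)
  let g : (↥p × ↥q) →ₗ[R] ↥(p ⊔ q) :=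
    LinearMap.codRestrict (p ⊔ q)
      (p.subtype ∘ₗ LinearMap.fst R ↥p ↥q + q.subtype ∘ₗ LinearMap.snd R ↥p ↥q)
      hmem
  have hbij : Function.Bijective g := by
    constructor
    · intro x y hxy
      have hxy' : (x.1 : M) + (x.2 : M) = (y.1 : M) + (y.2 : M) := congrArg Subtype.val hxy
      have h1 : ((x.1 : M) - y.1) = -((x.2 : M) - y.2) := by
        have := hxy'
        abel_nf
        linear_combination (norm := abel) this
      have hmemp : ((x.1 : M) - y.1) ∈ p := Submodule.sub_mem _ x.1.2 y.1.2
      have hmemq : ((x.1 : M) - y.1) ∈ q := by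
        rw [h1]; exact Submodule.neg_mem _ (Submodule.sub_mem _ x.2.2 y.2.2)
      have hz : ((x.1 : M) - y.1) = 0 := by
        have : ((x.1 : M) - y.1) ∈ p ⊓ q := ⟨hmemp, hmemq⟩
        rw [hpq] at this; exact this
      have h2 : ((x.2 : M) - y.2) = 0 := by
        have := h1
        rw [hz] at this
        exact neg_eq_zero.mp this.symm
      refine Prod.ext (Subtype.ext ?_) (Subtype.ext ?_)
      · exact sub_eq_zero.mp hz
      · exact sub_eq_zero.mp h2
    · rintro ⟨x, hx⟩
      rcases Submodule.mem_sup.mp hx with ⟨y, hy, z, hz, hyz⟩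
      exact ⟨(⟨y, hy⟩, ⟨z, hz⟩), Subtype.ext hyz⟩
  exact projective_of_equiv (LinearEquiv.ofBijective g hbij) inferInstance

section FinDim
variable [FiniteDimensional k A]

include k in
lemma noeth_op_A : IsNoetherian Aᵐᵒᵖ A :=
  isNoetherian_of_tower k inferInstance

include k in
lemma artin_op_A : IsArtinian Aᵐᵒᵖ A :=
  isArtinian_of_tower k inferInstance

/-- `A` as a right module over itself is isomorphic to `Aᵐᵒᵖ` as a left module. -/
def opEquiv : A ≃ₗ[Aᵐᵒᵖ] Aᵐᵒᵖ where
  toFun a := op a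
  invFun x := unop x
  left_inv a := rfl
  right_inv x := rfl
  map_add' a b := rfl
  map_smul' r a := rfl

include k in
lemma artinRing_op : IsArtinianRing Aᵐᵒᵖ := by
  haveI := artin_op_A (k := k) (A := A)
  exact isArtinian_of_linearEquiv (opEquiv (A := A))

include k in
lemma artin_module {M : Type v} [AddCommGroup M] [Module Aᵐᵒᵖ M]
    [Module.Finite Aᵐᵒᵖ M] : IsArtinian Aᵐᵒᵖ M := by
  haveI := artinRing_op (k := k) (A := A)
  exact isArtinian_of_fg_of_artinian'

end FinDim

lemma exists_hull [FiniteDimensional k A] (hinj : Module.Injective Aᵐᵒᵖ A)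
    (S : Submodule Aᵐᵒᵖ A) (hS : IsSimpleModule Aᵐᵒᵖ ↥S) :
    ∃ (E : Submodule Aᵐᵒᵖ A) (ρ : A →ₗ[Aᵐᵒᵖ] A),
      S ≤ E ∧ (∀ e ∈ E, ρ e = e) ∧ (∀ x : A, ρ x ∈ E) ∧
      (∀ X : Submodule Aᵐᵒᵖ A, X ≤ E → X ⊓ S = ⊥ → X = ⊥) := by
  haveI hnoe : IsNoetherian Aᵐᵒᵖ A := noeth_op_A (k := k)
  have hmax := set_has_maximal_iff_noetherian.mpr hnoe
  obtain ⟨E, hE, hEmax⟩ := hmax {E | S ≤ E ∧ ∀ X ≤ E, X ⊓ S = ⊥ → X = ⊥}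
    ⟨S, le_rfl, fun X hX h0 => by rwa [inf_eq_left.mpr hX] at h0⟩
  obtain ⟨hSE, hEess⟩ := hE
  obtain ⟨C, hC, hCmax⟩ := hmax {C | C ⊓ E = ⊥} ⟨⊥, bot_inf_eq E⟩
  set j : ↥E →ₗ[Aᵐᵒᵖ] A ⧸ C := C.mkQ ∘ₗ E.subtype with hj
  have hjinj : Function.Injective j := by
    rw [← LinearMap.ker_eq_bot, eq_bot_iff]
    rintro x hx
    have hxC : (x : A) ∈ C := by
      simpa [j, Submodule.Quotient.mk_eq_zero] using hx
    have hx0 : (x : A) ∈ C ⊓ E := ⟨hxC, x.2⟩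
    rw [hC] at hx0
    exact Subtype.ext hx0
  obtain ⟨h, hh⟩ := hinj.out j hjinj E.subtype
  have hhE : ∀ e (he : e ∈ E), h (C.mkQ e) = e := fun e he => hh ⟨e, he⟩
  have hess : ∀ Y : Submodule Aᵐᵒᵖ (A ⧸ C), Y ≠ ⊥ →
      ∃ e, e ∈ E ∧ e ≠ 0 ∧ C.mkQ e ∈ Y := by
    intro Y hY
    set X := Submodule.comap C.mkQ Y with hX
    have hCX : C ≤ X := by
      intro c hc
      show C.mkQ c ∈ Y
      have hc0 : C.mkQ c = 0 := (Submodule.Quotient.mk_eq_zero C).mpr hc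
      rw [hc0]; exact Y.zero_mem
    have hCneX : C ≠ X := by
      obtain ⟨y, hyY, hy0⟩ := (Submodule.ne_bot_iff _).mp hY
      obtain ⟨x, rfl⟩ := C.mkQ_surjective y
      intro hEq
      have : x ∈ X := hyY
      rw [← hEq] at this
      exact hy0 ((Submodule.Quotient.mk_eq_zero C).mpr this)
    have hXE : ¬ (X ⊓ E = ⊥) := by
      intro h0
      exact hCneX (le_antisymm hCX (le_of_eq ((hCmax X h0 (lt_of_le_of_ne hCX hCneX)).elim)))
    obtain ⟨w, hw, hw0⟩ := (Submodule.ne_bot_iff _).mp hXE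
    exact ⟨w, hw.2, hw0, hw.1⟩
  have hrangeE : LinearMap.range h = E := by
    have hle : E ≤ LinearMap.range h := by
      intro e he
      exact ⟨C.mkQ e, hhE e he⟩
    have hmem : LinearMap.range h ∈ {E | S ≤ E ∧ ∀ X ≤ E, X ⊓ S = ⊥ → X = ⊥} := by
      constructor
      · exact le_trans hSE hle
      · intro X hXle hXS
        by_contra hX0
        have hY : Submodule.comap h X ≠ ⊥ := by
          obtain ⟨x, hxX, hx0⟩ := (Submodule.ne_bot_iff _).mp hX0
          obtain ⟨y, rfl⟩ := hXle hxX
          exact (Submodule.ne_bot_iff _).mpr ⟨y, hxX, fun hy => hx0 (by rw [hy, map_zero])⟩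
        obtain ⟨e, heE, he0, heY⟩ := hess _ hY
        have heX : e ∈ X := by
          have : h (C.mkQ e) ∈ X := heY
          rwa [hhE e heE] at this
        have hZ : X ⊓ E = ⊥ := hEess (X ⊓ E) inf_le_right
          (le_antisymm (le_trans (inf_le_inf_right S inf_le_left) (le_of_eq hXS)) bot_le)
        have : e ∈ X ⊓ E := ⟨heX, heE⟩
        rw [hZ] at this
        exact he0 this
    by_contra hne
    exact hEmax _ hmem (lt_of_le_of_ne hle (fun hEq => hne hEq.symm))
  refine ⟨E, h ∘ₗ C.mkQ, hSE, fun e he => hhE e he, fun x => ?_, hEess⟩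
  rw [← hrangeE]
  exact ⟨C.mkQ x, rfl⟩

lemma projective_op_A : Module.Projective Aᵐᵒᵖ A :=
  projective_of_equiv (opEquiv (A := A)).symm inferInstance

/-- The `Aᵐᵒᵖ`-linear map `a ↦ m ⬝ a` for a fixed `m`. -/
def actMap {M : Type w} [AddCommGroup M] [Module Aᵐᵒᵖ M] (m : M) : A →ₗ[Aᵐᵒᵖ] M where
  toFun a := op a • m
  map_add' a b := by
    show op (a + b) • m = op a • m + op b • m
    rw [op_add, add_smul]
  map_smul' r a := by
    show op (a * unop r) • m = r • (op a • m)
    rw [op_mul, op_unop, mul_smul]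

lemma split_off [FiniteDimensional k A] (hinj : Module.Injective Aᵐᵒᵖ A)
    (soc : Submodule Aᵐᵒᵖ A)
    (hsoc : soc = sSup {S : Submodule Aᵐᵒᵖ A | IsSimpleModule Aᵐᵒᵖ S})
    {M : Type v} [AddCommGroup M] [Module Aᵐᵒᵖ M]
    (m : M) (s : A) (hs : s ∈ soc) (hms : op s • m ≠ 0) :
    ∃ (P K : Submodule Aᵐᵒᵖ M), P ⊔ K = ⊤ ∧ P ⊓ K = ⊥ ∧
      Module.Projective Aᵐᵒᵖ ↥P ∧ P ≠ ⊥ := by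
  set f : A →ₗ[Aᵐᵒᵖ] M := actMap m with hf
  have hfs : f s ≠ 0 := hms
  have hnotle : ¬ soc ≤ LinearMap.ker f := fun hle => hfs (hle hs)
  rw [hsoc] at hnotle
  rw [sSup_le_iff] at hnotle
  push_neg at hnotle
  obtain ⟨S, hSsimple, hSf⟩ := hnotle
  haveI hS' : IsSimpleModule Aᵐᵒᵖ ↥S := hSsimple
  have hSinj : ∀ x ∈ S, f x = 0 → x = 0 := by
    intro x hx hfx
    rcases eq_bot_or_eq_top (LinearMap.ker (f ∘ₗ S.subtype)) with hk | hk
    · have : (⟨x, hx⟩ : ↥S) ∈ LinearMap.ker (f ∘ₗ S.subtype) := hfx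
      rw [hk] at this
      exact congrArg Subtype.val this
    · exfalso
      apply hSf
      intro y hy
      have : (⟨y, hy⟩ : ↥S) ∈ LinearMap.ker (f ∘ₗ S.subtype) := by rw [hk]; trivial
      exact this
  obtain ⟨E, ρ, hSE, hρid, hρE, hEess⟩ := exists_hull (k := k) hinj S hS'
  have hfE : ∀ x ∈ E, f x = 0 → x = 0 := by
    intro x hx hfx
    have hX : (LinearMap.ker f ⊓ E) = ⊥ := by
      apply hEess _ inf_le_right
      rw [eq_bot_iff]
      rintro z ⟨⟨hz1, _⟩, hz2⟩
      have : z = 0 := hSinj z hz2 hz1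
      rw [this]; trivial
    have : x ∈ LinearMap.ker f ⊓ E := ⟨hfx, hx⟩
    rw [hX] at this
    exact this
  have hfEinj : Function.Injective (f ∘ₗ E.subtype) := by
    rw [← LinearMap.ker_eq_bot, eq_bot_iff]
    intro x hx
    exact Subtype.ext (hfE x x.2 hx)
  obtain ⟨r, hr⟩ := hinj.out (f ∘ₗ E.subtype) hfEinj E.subtype
  set r' : M →ₗ[Aᵐᵒᵖ] A := ρ ∘ₗ r with hr'def
  have hr' : ∀ e ∈ E, r' (f e) = e := by
    intro e he
    have := hr ⟨e, he⟩
    show ρ (r (f e)) = e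
    have hre : r (f e) = e := this
    rw [hre]
    exact hρid e he
  set π : M →ₗ[Aᵐᵒᵖ] M := f ∘ₗ r' with hπdef
  have hπmem : ∀ x : M, r' x ∈ E := fun x => hρE (r x)
  have hπidem : ∀ x, π (π x) = π x := by
    intro x
    show f (r' (f (r' x))) = f (r' x)
    rw [hr' (r' x) (hπmem x)]
  refine ⟨LinearMap.range π, LinearMap.ker π, ?_, ?_, ?_, ?_⟩
  · rw [eq_top_iff]
    intro x _
    rw [Submodule.mem_sup]
    exact ⟨π x, ⟨x, rfl⟩, x - π x, by simp [LinearMap.mem_ker, map_sub, hπidem], by abel⟩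
  · rw [eq_bot_iff]
    rintro x ⟨⟨y, rfl⟩, hker⟩
    have : π (π y) = 0 := hker
    rw [hπidem] at this
    exact this
  · have hfix : ∀ x ∈ LinearMap.range π, π x = x := by
      rintro x ⟨y, rfl⟩; exact hπidem y
    have hmem2 : ∀ a : A, f (ρ a) ∈ LinearMap.range π := by
      intro a
      refine ⟨f (ρ a), ?_⟩
      show f (r' (f (ρ a))) = f (ρ a)
      rw [hr' (ρ a) (hρE a)]
    haveI := projective_op_A (A := A)
    refine Module.Projective.of_split
      (r' ∘ₗ (LinearMap.range π).subtype)
      (LinearMap.codRestrict _ (f ∘ₗ ρ) hmem2) ?_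
    ext x
    show f (ρ (r' (x : M))) = (x : M)
    rw [hρid _ (hπmem (x : M))]
    exact hfix _ x.2
  · obtain ⟨y, hyS, hyf⟩ : ∃ y ∈ S, f y ≠ 0 := by
      by_contra hall
      push_neg at hall
      exact hSf fun y hy => hall y hy
    apply (Submodule.ne_bot_iff _).mpr
    refine ⟨f y, ⟨f y, ?_⟩, hyf⟩
    show f (r' (f y)) = f y
    rw [hr' y (hSE hyS)]

lemma projective_of_subsingleton {R : Type*} [Ring R] {X : Type*}
    [AddCommGroup X] [Module R X] [Subsingleton X] : Module.Projective R X :=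
  Module.Projective.of_split (M := R) 0 0 (by ext x; exact Subsingleton.elim _ _)

lemma exists_good [FiniteDimensional k A] (hinj : Module.Injective Aᵐᵒᵖ A)
    (soc : Submodule Aᵐᵒᵖ A)
    (hsoc : soc = sSup {S : Submodule Aᵐᵒᵖ A | IsSimpleModule Aᵐᵒᵖ S})
    (M : Type v) [AddCommGroup M] [Module Aᵐᵒᵖ M] [Module.Finite Aᵐᵒᵖ M] :
    ∃ M₀ P : Submodule Aᵐᵒᵖ M, IsCompl M₀ P ∧ Module.Projective Aᵐᵒᵖ ↥P ∧
      (∀ x ∈ M₀, ∀ s ∈ soc, op s • x = (0 : M)) := by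
  haveI := artin_module (k := k) (A := A) (M := M)
  have main : ∀ N : Submodule Aᵐᵒᵖ M,
      ∃ M₀ P : Submodule Aᵐᵒᵖ M, M₀ ⊔ P = N ∧ M₀ ⊓ P = ⊥ ∧
        Module.Projective Aᵐᵒᵖ ↥P ∧ (∀ x ∈ M₀, ∀ s ∈ soc, op s • x = (0 : M)) := by
    intro N
    induction N using IsArtinian.induction with
    | _ N IH =>
      by_cases hkill : ∀ x ∈ N, ∀ s ∈ soc, op s • x = (0 : M)
      · exact ⟨N, ⊥, sup_bot_eq N, inf_bot_eq N, projective_of_subsingleton, hkill⟩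
      · push_neg at hkill
        obtain ⟨m, hmN, s, hssoc, hms⟩ := hkill
        have hms' : op s • (⟨m, hmN⟩ : ↥N) ≠ 0 := by
          intro h0
          exact hms (by simpa using congrArg Subtype.val h0)
        obtain ⟨P', K', hsup', hinf', hproj', hne'⟩ :=
          split_off (k := k) hinj soc hsoc (⟨m, hmN⟩ : ↥N) s hssoc hms'
        set mapP := Submodule.map N.subtype P' with hmapP
        set mapK := Submodule.map N.subtype K' with hmapK
        have hKle : mapK ≤ N := Submodule.map_subtype_le N K'
        have hKlt : mapK < N := by
          obtain ⟨p, hpP', hp0⟩ := (Submodule.ne_bot_iff _).mp hne'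
          refine lt_of_le_of_ne hKle (fun hEq => ?_)
          have hpN : (p : M) ∈ mapK := by rw [hEq]; exact p.2
          obtain ⟨w, hwK', hw⟩ := hpN
          have hwp : w = p := Subtype.ext hw
          rw [hwp] at hwK'
          have : p ∈ P' ⊓ K' := ⟨hpP', hwK'⟩
          rw [hinf'] at this
          exact hp0 this
        obtain ⟨M₀, P₂, hsup₂, hinf₂, hproj₂, hkill₂⟩ := IH mapK hKlt
        have hM₀K : M₀ ≤ mapK := le_sup_left.trans hsup₂.le
        have hP₂K : P₂ ≤ mapK := le_sup_right.trans hsup₂.le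
        have hdisj : mapK ⊓ mapP = ⊥ := by
          rw [hmapK, hmapP, ← Submodule.map_inf N.subtype (Submodule.injective_subtype N),
            inf_comm, hinf', Submodule.map_bot]
        refine ⟨M₀, P₂ ⊔ mapP, ?_, ?_, ?_, hkill₂⟩
        · rw [← sup_assoc, hsup₂, hmapK, hmapP, ← Submodule.map_sup, sup_comm K' P', hsup',
            Submodule.map_subtype_top]
        · rw [eq_bot_iff]
          rintro x ⟨hxM₀, hxPP⟩
          obtain ⟨y, hy, z, hz, hyz⟩ := Submodule.mem_sup.mp hxPP
          have hzK : z ∈ mapK := by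
            have hx : x ∈ mapK := hM₀K hxM₀
            have hy' : y ∈ mapK := hP₂K hy
            have : z = x - y := by rw [← hyz]; abel
            rw [this]
            exact Submodule.sub_mem _ hx hy'
          have hz0 : z = 0 := by
            have : z ∈ mapK ⊓ mapP := ⟨hzK, hz⟩
            rwa [hdisj] at this
          have hxy : x = y := by rw [← hyz, hz0, add_zero]
          have : x ∈ M₀ ⊓ P₂ := ⟨hxM₀, hxy ▸ hy⟩
          rwa [hinf₂] at this
        · have hd : P₂ ⊓ mapP = ⊥ := by
            rw [eq_bot_iff]
            intro x hx
            have : x ∈ mapK ⊓ mapP := ⟨hP₂K hx.1, hx.2⟩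
            rwa [hdisj] at this
          have hmapPproj : Module.Projective Aᵐᵒᵖ ↥mapP := by
            rw [hmapP]
            exact projective_of_equiv (R := Aᵐᵒᵖ) (X := ↥P')
              (Y := ↥(Submodule.map N.subtype P'))
              (Submodule.equivSubtypeMap N P') hproj'
          exact projective_sup P₂ mapP hd hproj₂ hmapPproj
  obtain ⟨M₀, P, hsup, hinf, hproj, hkill⟩ := main ⊤
  exact ⟨M₀, P, IsCompl.of_eq hinf hsup, hproj, hkill⟩

lemma finsupp_proj {P : Type v} : Module.Projective Aᵐᵒᵖ (P →₀ Aᵐᵒᵖ) := inferInstance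

/-- The untwisting linear equivalence between `Tw φ (P →₀ Aᵐᵒᵖ)` and `P →₀ Aᵐᵒᵖ`. -/
noncomputable def twFinsuppEquiv (φ : A ≃ₐ[k] A) (P : Type v) :
    Tw φ (P →₀ Aᵐᵒᵖ) ≃ₗ[Aᵐᵒᵖ] (P →₀ Aᵐᵒᵖ) where
  toFun c := Finsupp.mapRange (fun x => op (φ.symm (unop x))) (by simp) (show P →₀ Aᵐᵒᵖ from c)
  invFun c := Tw.of φ (Finsupp.mapRange (fun x => op (φ (unop x))) (by simp) c)
  left_inv c := Finsupp.ext (fun p => by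
    show op (φ (unop (op (φ.symm (unop ((show P →₀ Aᵐᵒᵖ from c) p)))))) = (show P →₀ Aᵐᵒᵖ from c) p
    simp)
  right_inv c := Finsupp.ext (fun p => by
    simp [Tw.of, Function.comp, Finsupp.mapRange_apply])
  map_add' c d := Finsupp.mapRange_add (by intro a b; rw [unop_add, map_add, op_add]) _ _
  map_smul' r c := by
    have key : ∀ (d : P →₀ Aᵐᵒᵖ) (b : Aᵐᵒᵖ),
        Finsupp.mapRange (fun x => op (φ.symm (unop x))) (by simp) (b • d)
          = op (φ.symm (unop b)) •
            Finsupp.mapRange (fun x => op (φ.symm (unop x))) (by simp) d := by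
      intro d b
      ext p
      simp only [Finsupp.smul_apply, Finsupp.mapRange_apply, smul_eq_mul, unop_mul,
        map_mul, op_mul]
    show Finsupp.mapRange (fun x => op (φ.symm (unop x))) (by simp)
        ((op (φ (unop r))) • (show P →₀ Aᵐᵒᵖ from c))
      = r • Finsupp.mapRange (fun x => op (φ.symm (unop x))) (by simp)
          (show P →₀ Aᵐᵒᵖ from c)
    rw [key]
    congr 1
    rw [unop_op, AlgEquiv.symm_apply_apply, op_unop]

lemma tw_projective (φ : A ≃ₐ[k] A) {P : Type v} [AddCommGroup P] [Module Aᵐᵒᵖ P]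
    (h : Module.Projective Aᵐᵒᵖ P) : Module.Projective Aᵐᵒᵖ (Tw φ P) := by
  obtain ⟨s, hs⟩ := h.out
  have hTwF : Module.Projective Aᵐᵒᵖ (Tw φ (P →₀ Aᵐᵒᵖ)) :=
    projective_of_equiv (twFinsuppEquiv φ P).symm (finsupp_proj (A := A))
  haveI := hTwF
  refine Module.Projective.of_split (twMap φ s)
    (twMap φ (Finsupp.linearCombination Aᵐᵒᵖ id)) ?_
  refine LinearMap.ext (fun x => ?_)
  exact hs x

lemma ftp_comp_proj {R : Type v} [Ring R] {M N P : Type v}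
    [AddCommGroup M] [Module R M] [AddCommGroup N] [Module R N]
    [AddCommGroup P] [Module R P]
    (hP : Module.Projective R P) (g : M →ₗ[R] P) (h : P →ₗ[R] N) :
    FactorsThroughProjective (h ∘ₗ g) :=
  ⟨P, inferInstance, inferInstance, hP, g, h, rfl⟩

lemma ftp_add {R : Type v} [Ring R] {M N : Type v}
    [AddCommGroup M] [Module R M] [AddCommGroup N] [Module R N]
    {f₁ f₂ : M →ₗ[R] N}
    (h1 : FactorsThroughProjective f₁) (h2 : FactorsThroughProjective f₂) :
    FactorsThroughProjective (f₁ + f₂) := by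
  obtain ⟨P₁, iP₁, mP₁, hP₁, g₁, h₁, e₁⟩ := h1
  obtain ⟨P₂, iP₂, mP₂, hP₂, g₂, h₂, e₂⟩ := h2
  refine ⟨P₁ × P₂, inferInstance, inferInstance, ?_, g₁.prod g₂,
    h₁ ∘ₗ LinearMap.fst R P₁ P₂ + h₂ ∘ₗ LinearMap.snd R P₁ P₂, ?_⟩
  · haveI := hP₁; haveI := hP₂; exact inferInstance
  · ext x
    simp [e₁, e₂]

lemma smul_eq_of_sub_mem (soc : Submodule Aᵐᵒᵖ A) {M : Type v} [AddCommGroup M]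
    [Module Aᵐᵒᵖ M] {x : M} (hx : ∀ s ∈ soc, op s • x = (0 : M)) {a b : A}
    (hab : a - b ∈ soc) : op a • x = op b • x := by
  have h := hx _ hab
  rw [op_sub, sub_smul] at h
  exact sub_eq_zero.mp h

noncomputable def etaOf (φ : A ≃ₐ[k] A) (soc : Submodule Aᵐᵒᵖ A) (v : A)
    {M : Type v} [AddCommGroup M] [Module Aᵐᵒᵖ M]
    (M₀ P : Submodule Aᵐᵒᵖ M) (hc : IsCompl M₀ P)
    (hkill : ∀ x ∈ M₀, ∀ s ∈ soc, op s • x = (0 : M))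
    (hv : ∀ a : A, a * v - v * φ a ∈ soc) :
    M →ₗ[Aᵐᵒᵖ] Tw φ M where
  toFun m := Tw.of φ (op v • ((M₀.projectionOnto P hc m : M)))
  map_add' m n := by
    show op v • ((M₀.projectionOnto P hc (m + n) : M)) =
      op v • ((M₀.projectionOnto P hc m : M)) +
      op v • ((M₀.projectionOnto P hc n : M))
    rw [map_add, Submodule.coe_add, smul_add]
  map_smul' r m := by
    show op v • ((M₀.projectionOnto P hc (r • m) : M))
      = op (φ (unop r)) • (op v • ((M₀.projectionOnto P hc m : M)))
    rw [map_smul, Submodule.coe_smul, ← mul_smul, ← mul_smul]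
    rw [show op v * r = op (unop r * v) by rw [op_mul, op_unop],
        show op (φ (unop r)) * op v = op (v * φ (unop r)) from (op_mul _ _).symm]
    exact smul_eq_of_sub_mem soc (hkill _ (SetLike.coe_mem _)) (hv (unop r))

noncomputable def zetaOf (φ : A ≃ₐ[k] A) (soc : Submodule Aᵐᵒᵖ A) (u : A)
    {M : Type v} [AddCommGroup M] [Module Aᵐᵒᵖ M]
    (M₀ P : Submodule Aᵐᵒᵖ M) (hc : IsCompl M₀ P)
    (hkill : ∀ x ∈ M₀, ∀ s ∈ soc, op s • x = (0 : M))
    (hu : ∀ a : A, φ a * u - u * a ∈ soc) :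
    Tw φ M →ₗ[Aᵐᵒᵖ] M where
  toFun x := op u • ((M₀.projectionOnto P hc (show M from x) : M))
  map_add' x y := by
    show op u • ((M₀.projectionOnto P hc (@HAdd.hAdd M M M _ x y) : M)) =
      op u • ((M₀.projectionOnto P hc x : M)) + op u • ((M₀.projectionOnto P hc y : M))
    exact (show ∀ a b : M, op u • ((M₀.projectionOnto P hc (a + b) : M)) =
        op u • ((M₀.projectionOnto P hc a : M)) + op u • ((M₀.projectionOnto P hc b : M)) from
      fun a b => by rw [map_add, Submodule.coe_add, smul_add]) x y
  map_smul' r x := by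
    show op u • ((M₀.projectionOnto P hc
        (op (φ (unop r)) • (show M from x)) : M))
      = r • (op u • ((M₀.projectionOnto P hc (show M from x) : M)))
    rw [map_smul, Submodule.coe_smul, ← mul_smul, ← mul_smul]
    rw [show op u * op (φ (unop r)) = op (φ (unop r) * u) from (op_mul _ _).symm,
        show r * op u = op (u * unop r) by rw [op_mul, op_unop]]
    exact smul_eq_of_sub_mem soc (hkill _ (SetLike.coe_mem _)) (hu (unop r))

noncomputable def shiftOf (φ : A ≃ₐ[k] A) (soc : Submodule Aᵐᵒᵖ A) (v : A)
    {X Y : Type v} [AddCommGroup X] [Module Aᵐᵒᵖ X] [AddCommGroup Y] [Module Aᵐᵒᵖ Y]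
    (p : X →ₗ[Aᵐᵒᵖ] Y)
    (hkill : ∀ (x : X), ∀ s ∈ soc, op s • x = (0 : X))
    (hv : ∀ a : A, a * v - v * φ a ∈ soc) : X →ₗ[Aᵐᵒᵖ] Tw φ Y where
  toFun x := Tw.of φ (op v • p x)
  map_add' x y := by
    show op v • p (x + y) = op v • p x + op v • p y
    rw [map_add, smul_add]
  map_smul' r x := by
    show op v • p (r • x) = op (φ (unop r)) • (op v • p x)
    rw [map_smul, ← mul_smul, ← mul_smul]
    rw [show op v * r = op (unop r * v) by rw [op_mul, op_unop],
        show op (φ (unop r)) * op v = op (v * φ (unop r)) from (op_mul _ _).symm]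
    rw [← map_smul, ← map_smul]
    congr 1
    exact smul_eq_of_sub_mem soc (hkill x) (hv (unop r))

lemma coe_kill {M : Type v} [AddCommGroup M] [Module Aᵐᵒᵖ M]
    {soc : Submodule Aᵐᵒᵖ A} {M₀ : Submodule Aᵐᵒᵖ M}
    (hkill : ∀ x ∈ M₀, ∀ s ∈ soc, op s • x = (0 : M)) :
    ∀ (x : ↥M₀), ∀ s ∈ soc, op s • x = (0 : ↥M₀) := by
  intro x s hs
  apply Subtype.ext
  show op s • (x : M) = (0 : M)
  exact hkill _ x.2 s hs

lemma naturality (φ : A ≃ₐ[k] A) (soc : Submodule Aᵐᵒᵖ A) (v : A)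
    (hv : ∀ a : A, a * v - v * φ a ∈ soc)
    {M N : Type v} [AddCommGroup M] [Module Aᵐᵒᵖ M] [AddCommGroup N] [Module Aᵐᵒᵖ N]
    (M₀ PM : Submodule Aᵐᵒᵖ M) (hcM : IsCompl M₀ PM)
    (hkillM : ∀ x ∈ M₀, ∀ s ∈ soc, op s • x = (0 : M))
    (hprojM : Module.Projective Aᵐᵒᵖ ↥PM)
    (N₀ PN : Submodule Aᵐᵒᵖ N) (hcN : IsCompl N₀ PN)
    (hkillN : ∀ x ∈ N₀, ∀ s ∈ soc, op s • x = (0 : N))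
    (hprojN : Module.Projective Aᵐᵒᵖ ↥PN)
    (f : M →ₗ[Aᵐᵒᵖ] N) :
    FactorsThroughProjective
      (etaOf φ soc v N₀ PN hcN hkillN hv ∘ₗ f -
        twMap φ f ∘ₗ etaOf φ soc v M₀ PM hcM hkillM hv) := by
  set ηM := etaOf φ soc v M₀ PM hcM hkillM hv with hηM
  set ηN := etaOf φ soc v N₀ PN hcN hkillN hv with hηN
  set e := ηN ∘ₗ f - twMap φ f ∘ₗ ηM with he
  set π₀ := M₀.projectionOnto PM hcM with hπ₀
  set π₁ := PM.projectionOnto M₀ hcM.symm with hπ₁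
  set κ₀ := N₀.projectionOnto PN hcN with hκ₀
  set κ₁ := PN.projectionOnto N₀ hcN.symm with hκ₁
  set pneg : ↥M₀ →ₗ[Aᵐᵒᵖ] ↥PN := -(κ₁ ∘ₗ f ∘ₗ M₀.subtype) with hpneg
  have heq : e = (e ∘ₗ PM.subtype) ∘ₗ π₁ +
      (twMap φ PN.subtype) ∘ₗ ((shiftOf φ soc v pneg (coe_kill hkillM) hv) ∘ₗ π₀) := by
    refine LinearMap.ext (fun m => ?_)
    have hab : ((π₀ m : M)) + ((π₁ m : M)) = m :=
      Submodule.projection_add_projection_eq_self hcM m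
    set a := ((π₀ m : M)) with ha
    set b := ((π₁ m : M)) with hb
    have hL : e m = Tw.of φ (op v • ((κ₀ (f m) : N)) - op v • f a) := by
      show ηN (f m) - (twMap φ f) (ηM m) = _
      have h2 : (twMap φ f) (ηM m) = Tw.of φ (op v • f a) := by
        show Tw.of φ (f (op v • a)) = Tw.of φ (op v • f a)
        rw [map_smul]
      rw [h2]
      rfl
    have hT1 : e ((PM.subtype) (π₁ m)) = Tw.of φ (op v • ((κ₀ (f b) : N))) := by
      have h3 : π₀ b = 0 := Submodule.projectionOnto_apply_right hcM (π₁ m)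
      have h5 : ηM b = 0 := by
        show Tw.of φ (op v • ((π₀ b : M))) = 0
        rw [h3]
        show op v • (((0 : ↥M₀) : M)) = (0 : M)
        rw [Submodule.coe_zero, smul_zero]
      show ηN (f b) - (twMap φ f) (ηM b) = _
      rw [h5, map_zero, sub_zero]
      rfl
    have hT2 : (twMap φ PN.subtype) ((shiftOf φ soc v pneg (coe_kill hkillM) hv) (π₀ m))
        = Tw.of φ (-(op v • ((κ₁ (f a) : N)))) := by
      show Tw.of φ ((PN.subtype) (op v • (pneg (π₀ m)))) = _
      have h5 : pneg (π₀ m) = -(κ₁ (f a)) := rfl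
      rw [h5]
      show (PN.subtype) (op v • (-(κ₁ (f a)))) = -(op v • ((κ₁ (f a) : N)))
      rw [map_smul, map_neg, smul_neg]
      rfl
    show e m = e ((PM.subtype) (π₁ m)) +
      (twMap φ PN.subtype) ((shiftOf φ soc v pneg (coe_kill hkillM) hv) (π₀ m))
    rw [hL, hT1, hT2]
    show (op v • ((κ₀ (f m) : N)) - op v • f a)
      = (op v • ((κ₀ (f b) : N))) + (-(op v • ((κ₁ (f a) : N))))
    have h6 : f m = f a + f b := by rw [← map_add, hab]
    have h7 : ((κ₀ (f a) : N)) + ((κ₁ (f a) : N)) = f a :=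
      Submodule.projection_add_projection_eq_self hcN (f a)
    rw [h6, map_add, Submodule.coe_add, ← smul_sub, ← smul_neg, ← smul_add]
    congr 1
    linear_combination (norm := abel) h7
  rw [heq]
  exact ftp_add
    (ftp_comp_proj hprojM π₁ (e ∘ₗ PM.subtype))
    (ftp_comp_proj (tw_projective φ hprojN)
      ((shiftOf φ soc v pneg (coe_kill hkillM) hv) ∘ₗ π₀) (twMap φ PN.subtype))

lemma stable_iso (φ : A ≃ₐ[k] A) (soc : Submodule Aᵐᵒᵖ A) (uu vv : A)
    (hv : ∀ a : A, a * vv - vv * φ a ∈ soc)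
    (hu : ∀ a : A, φ a * uu - uu * a ∈ soc)
    (hvu : vv * uu - 1 ∈ soc) (huv : uu * vv - 1 ∈ soc)
    {M : Type v} [AddCommGroup M] [Module Aᵐᵒᵖ M]
    (M₀ P : Submodule Aᵐᵒᵖ M) (hc : IsCompl M₀ P)
    (hkill : ∀ x ∈ M₀, ∀ s ∈ soc, op s • x = (0 : M))
    (hproj : Module.Projective Aᵐᵒᵖ ↥P) :
    ∃ ζ : Tw φ M →ₗ[Aᵐᵒᵖ] M,
      FactorsThroughProjective (ζ ∘ₗ etaOf φ soc vv M₀ P hc hkill hv - LinearMap.id) ∧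
      FactorsThroughProjective (etaOf φ soc vv M₀ P hc hkill hv ∘ₗ ζ - LinearMap.id) := by
  set η := etaOf φ soc vv M₀ P hc hkill hv with hη
  set ζ := zetaOf φ soc uu M₀ P hc hkill hu with hζ
  set π₀ := M₀.projectionOnto P hc with hπ₀
  set π₁ := P.projectionOnto M₀ hc.symm with hπ₁
  refine ⟨ζ, ?_, ?_⟩
  · have heq : ζ ∘ₗ η - LinearMap.id = ((-P.subtype) ∘ₗ π₁) := by
      refine LinearMap.ext (fun m => ?_)
      have hζη : ζ (η m) = ((π₀ m : M)) := by
        show op uu • ((π₀ (op vv • ((π₀ m : M))) : M)) = ((π₀ m : M))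
        rw [map_smul π₀ (op vv), Submodule.projectionOnto_apply_left hc (π₀ m),
          Submodule.coe_smul, ← mul_smul,
          show (op uu * op vv : Aᵐᵒᵖ) = op (vv * uu) from (op_mul _ _).symm,
          smul_eq_of_sub_mem soc (hkill _ (SetLike.coe_mem (π₀ m))) hvu,
          op_one, one_smul]
      show ζ (η m) - m = -((π₁ m : M))
      rw [hζη]
      have hab : ((π₀ m : M)) + ((π₁ m : M)) = m :=
        Submodule.projection_add_projection_eq_self hc m
      linear_combination (norm := abel) hab
    rw [heq]
    exact ftp_comp_proj hproj π₁ (-P.subtype)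
  · have heq2 : η ∘ₗ ζ - LinearMap.id = (twMap φ (-P.subtype)) ∘ₗ (twMap φ π₁) := by
      refine LinearMap.ext (fun x => ?_)
      have hηζ : η (ζ x) = Tw.of φ ((π₀ (show M from x) : M)) := by
        show Tw.of φ (op vv • ((π₀ (op uu • ((π₀ (show M from x) : M))) : M))) = _
        rw [map_smul π₀ (op uu), Submodule.projectionOnto_apply_left hc,
          Submodule.coe_smul, ← mul_smul,
          show (op vv * op uu : Aᵐᵒᵖ) = op (uu * vv) from (op_mul _ _).symm,
          smul_eq_of_sub_mem soc (hkill _ (SetLike.coe_mem _)) huv,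
          op_one, one_smul]
      show η (ζ x) - x = Tw.of φ (-((π₁ (show M from x) : M)))
      rw [hηζ]
      show ((π₀ (show M from x) : M)) - (show M from x) = -((π₁ (show M from x) : M))
      have hab : ((π₀ (show M from x) : M)) + ((π₁ (show M from x) : M)) = (show M from x) :=
        Submodule.projection_add_projection_eq_self hc (show M from x)
      linear_combination (norm := abel) hab
    rw [heq2]
    exact ftp_comp_proj (tw_projective φ hproj) (twMap φ π₁) (twMap φ (-P.subtype))

end StableAux


/-- Let `A` be a finite-dimensional self-injective algebra and `φ` an
automorphism inducing an inner automorphism of `A/soc(A)`, where `soc(A)` is the sum of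
all simple submodules of the right regular module. Then `φ` is stably inner. -/
theorem stablyInner_of_inner_modulo_socle
    {k : Type u} {A : Type v} [Field k] [Ring A] [Algebra k A] [FiniteDimensional k A]
    (hselfinj : Module.Injective Aᵐᵒᵖ A)
    (φ : A ≃ₐ[k] A)
    (soc : Submodule Aᵐᵒᵖ A)
    (hsoc : soc = sSup {S : Submodule Aᵐᵒᵖ A | IsSimpleModule Aᵐᵒᵖ S})
    (hinner : ∃ u v : A, u * v - 1 ∈ soc ∧ v * u - 1 ∈ soc ∧
      ∀ a : A, v * φ a - a * v ∈ soc) :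
    StablyInner φ := by
  classical
  obtain ⟨uu, vv, huv, hvu, hcomm⟩ := hinner
  have hv : ∀ a : A, a * vv - vv * φ a ∈ soc := by
    intro a
    have h := soc.neg_mem (hcomm a)
    rwa [neg_sub] at h
  have hrmul : ∀ (x : A) {s : A}, s ∈ soc → s * x ∈ soc := by
    intro x s hs
    exact soc.smul_mem (MulOpposite.op x) hs
  have hu : ∀ a : A, φ a * uu - uu * a ∈ soc := by
    intro a
    have h1 : uu * ((vv * φ a - a * vv) * uu) ∈ soc :=
      StableAux.mul_mem_soc soc hsoc uu (hrmul uu (hcomm a))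
    have h2 : (uu * vv - 1) * (φ a * uu) ∈ soc := hrmul _ huv
    have h3 : uu * a * (vv * uu - 1) ∈ soc := StableAux.mul_mem_soc soc hsoc (uu * a) hvu
    have key : φ a * uu - uu * a =
        uu * ((vv * φ a - a * vv) * uu) - (uu * vv - 1) * (φ a * uu) +
          uu * a * (vv * uu - 1) := by
      noncomm_ring
    rw [key]
    exact soc.add_mem (soc.sub_mem h1 h2) h3
  have dec : ∀ (M : Type v) (iM : AddCommGroup M) (mM : Module Aᵐᵒᵖ M)
      (fM : Module.Finite Aᵐᵒᵖ M),
      ∃ q : Submodule Aᵐᵒᵖ M × Submodule Aᵐᵒᵖ M,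
        IsCompl q.1 q.2 ∧ Module.Projective Aᵐᵒᵖ ↥q.2 ∧
          ∀ x ∈ q.1, ∀ s ∈ soc, MulOpposite.op s • x = (0 : M) := by
    intro M iM mM fM
    obtain ⟨M₀, P, h1, h2, h3⟩ := StableAux.exists_good (k := k) hselfinj soc hsoc M
    exact ⟨(M₀, P), h1, h2, h3⟩
  choose q hcompl hproj hkill using dec
  refine ⟨fun M iM mM fM =>
    StableAux.etaOf φ soc vv (q M iM mM fM).1 (q M iM mM fM).2 (hcompl M iM mM fM)
      (hkill M iM mM fM) hv, ?_, ?_⟩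
  · intro M iM mM fM N iN mN fN f
    exact StableAux.naturality φ soc vv hv _ _ (hcompl M iM mM fM) (hkill M iM mM fM)
      (hproj M iM mM fM) _ _ (hcompl N iN mN fN) (hkill N iN mN fN) (hproj N iN mN fN) f
  · intro M iM mM fM
    exact StableAux.stable_iso φ soc uu vv hv hu hvu huv _ _ (hcompl M iM mM fM)
      (hkill M iM mM fM) (hproj M iM mM fM)
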